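/- In the Weyl algebra on variables X^i_j (1 ≤ i,j ≤ N) with Y^i_j = ∂/∂X^j_i, for any nonnegative integers r, s the operator identity Tr(X^r [X,Y] X^s) = -Tr(X^r)·Tr(X^s) holds, where matrix products and traces are taken with the noncommuting entries ordered as written. -/
import Mathlib


noncomputable section

/-- Matrix power of an `N × N` matrix with entries in a noncommutative ring,
with the entries multiplied in the written order. -/
def matPow {N : ℕ} {A : Type*} [Ring A] (X : Fin N → Fin N → A) : ℕ → Fin N → Fin N → A
  | 0 => fun i j => if i = j then 1 else 0
  | (r + 1) => fun i j => ∑ l, X i l * matPow X r l j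

namespace St2Aux

variable {N : ℕ} {A : Type*} [Ring A] (X Y : Fin N → Fin N → A)

lemma powX_comm (hXX : ∀ i j p q : Fin N, X i j * X p q = X p q * X i j) :
    ∀ (m : ℕ) (i j p q : Fin N), matPow X m i j * X p q = X p q * matPow X m i j := by
  intro m
  induction m with
  | zero => intro i j p q; simp only [matPow]; split <;> simp
  | succ m ih =>
    intro i j p q
    simp only [matPow, Finset.sum_mul, Finset.mul_sum]
    refine Finset.sum_congr rfl fun l _ => ?_
    rw [mul_assoc, ih, ← mul_assoc, hXX, mul_assoc]

lemma pow_succ_right (m : ℕ) (i j : Fin N) :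
    matPow X (m + 1) i j = ∑ l, matPow X m i l * X l j := by
  induction m generalizing i j with
  | zero =>
    simp only [matPow, ite_mul, one_mul, zero_mul, mul_ite, mul_one, mul_zero]
    rw [Finset.sum_ite_eq, Finset.sum_ite_eq']
    simp
  | succ m ih =>
    calc matPow X (m + 1 + 1) i j = ∑ x, X i x * matPow X (m+1) x j := rfl
      _ = ∑ x, X i x * ∑ l, matPow X m x l * X l j := by simp only [ih]
      _ = ∑ x, ∑ l, (X i x * matPow X m x l) * X l j := by
            simp only [Finset.mul_sum, mul_assoc]
      _ = ∑ l, (∑ x, X i x * matPow X m x l) * X l j := by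
            rw [Finset.sum_comm]; simp only [Finset.sum_mul]
      _ = ∑ l, matPow X (m+1) i l * X l j := rfl

lemma matPow_add (m n : ℕ) (i j : Fin N) :
    matPow X (m + n) i j = ∑ k, matPow X m i k * matPow X n k j := by
  induction m generalizing i j with
  | zero =>
    simp only [Nat.zero_add, matPow, ite_mul, one_mul, zero_mul]
    rw [Finset.sum_ite_eq]
    simp
  | succ m ih =>
    have h : m + 1 + n = (m + n) + 1 := by omega
    rw [h]
    calc matPow X (m + n + 1) i j = ∑ x, X i x * matPow X (m+n) x j := rfl
      _ = ∑ x, X i x * ∑ k, matPow X m x k * matPow X n k j := by simp only [ih]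
      _ = ∑ x, ∑ k, (X i x * matPow X m x k) * matPow X n k j := by
            simp only [Finset.mul_sum, mul_assoc]
      _ = ∑ k, (∑ x, X i x * matPow X m x k) * matPow X n k j := by
            rw [Finset.sum_comm]; simp only [Finset.sum_mul]
      _ = ∑ k, matPow X (m+1) i k * matPow X n k j := rfl

lemma powPow_comm (hXX : ∀ i j p q : Fin N, X i j * X p q = X p q * X i j) :
    ∀ (m n : ℕ) (i j p q : Fin N),
      matPow X m i j * matPow X n p q = matPow X n p q * matPow X m i j := by
  intro m
  induction m with
  | zero => intro n i j p q; simp only [matPow]; split <;> simp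
  | succ m ih =>
    intro n i j p q
    show (∑ l, X i l * matPow X m l j) * _ = _ * (∑ l, X i l * matPow X m l j)
    simp only [Finset.sum_mul, Finset.mul_sum]
    refine Finset.sum_congr rfl fun l _ => ?_
    rw [mul_assoc, ih, ← mul_assoc, ← powX_comm X hXX, mul_assoc]

lemma DX (hYX : ∀ i j p q : Fin N,
      Y i j * X p q - X p q * Y i j = if i = q ∧ p = j then 1 else 0)
    (hXX : ∀ i j p q : Fin N, X i j * X p q = X p q * X i j)
    (a b p q : Fin N) :
    (∑ l, (X a l * Y l b - Y a l * X l b)) * X p q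
      = X p q * (∑ l, (X a l * Y l b - Y a l * X l b))
        + ((if p = b then X a q else 0) - (if a = q then X p b else 0)) := by
  have key : ∀ l : Fin N, (X a l * Y l b - Y a l * X l b) * X p q
      = X p q * (X a l * Y l b - Y a l * X l b)
        + ((if l = q ∧ p = b then X a l else 0) - (if a = q ∧ p = l then X l b else 0)) := by
    intro l
    set e1 : A := if l = q ∧ p = b then 1 else 0 with he1
    set e2 : A := if a = q ∧ p = l then 1 else 0 with he2
    have h1 : Y l b * X p q = X p q * Y l b + e1 := by
      have h := hYX l b p q; rw [sub_eq_iff_eq_add] at h; rw [h, add_comm]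
    have h2 : Y a l * X p q = X p q * Y a l + e2 := by
      have h := hYX a l p q; rw [sub_eq_iff_eq_add] at h; rw [h, add_comm]
    have hb1 : (if l = q ∧ p = b then X a l else 0) = X a l * e1 := by
      rw [he1]; split <;> simp
    have hb2 : (if a = q ∧ p = l then X l b else 0) = e2 * X l b := by
      rw [he2]; split <;> simp
    rw [hb1, hb2]
    calc (X a l * Y l b - Y a l * X l b) * X p q
        = X a l * (Y l b * X p q) - Y a l * (X l b * X p q) := by
          rw [sub_mul, mul_assoc, mul_assoc]
      _ = X a l * (X p q * Y l b + e1) - Y a l * (X p q * X l b) := by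
          rw [h1, hXX l b p q]
      _ = (X a l * X p q) * Y l b + X a l * e1 - (Y a l * X p q) * X l b := by
          rw [mul_add, ← mul_assoc, ← mul_assoc]
      _ = (X p q * X a l) * Y l b + X a l * e1 - (X p q * Y a l + e2) * X l b := by
          rw [hXX a l p q, h2]
      _ = (X p q * (X a l * Y l b) + X a l * e1)
            - (X p q * (Y a l * X l b) + e2 * X l b) := by
          rw [add_mul, mul_assoc, mul_assoc]
      _ = X p q * (X a l * Y l b - Y a l * X l b) + (X a l * e1 - e2 * X l b) := by
          rw [mul_sub]; abel
  rw [Finset.sum_mul]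
  simp only [key]
  rw [Finset.sum_add_distrib, Finset.sum_sub_distrib, ← Finset.mul_sum]
  congr 1
  congr 1
  · by_cases hpb : p = b
    · simp [hpb, Finset.sum_ite_eq']
    · simp [hpb]
  · by_cases haq : a = q
    · simp [haq, Finset.sum_ite_eq]
    · simp [haq]

lemma DPow (hYX : ∀ i j p q : Fin N,
      Y i j * X p q - X p q * Y i j = if i = q ∧ p = j then 1 else 0)
    (hXX : ∀ i j p q : Fin N, X i j * X p q = X p q * X i j) :
    ∀ (s : ℕ) (a b p q : Fin N),
    (∑ l, (X a l * Y l b - Y a l * X l b)) * matPow X s p q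
      = matPow X s p q * (∑ l, (X a l * Y l b - Y a l * X l b))
        + ((if p = b then matPow X s a q else 0) - (if a = q then matPow X s p b else 0)) := by
  intro s
  induction s with
  | zero =>
    intro a b p q
    simp only [matPow]
    by_cases h1 : p = b <;> by_cases h2 : a = q <;>
      simp [h1, h2, mul_ite, ite_mul, mul_one, one_mul, mul_zero, zero_mul]
  | succ s ih =>
    intro a b p q
    set D : A := ∑ l, (X a l * Y l b - Y a l * X l b) with hD
    have step : ∀ x : Fin N, D * (X p x * matPow X s x q)
        = (X p x * matPow X s x q) * D
          + (((if p = b then X a x * matPow X s x q else 0)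
              - (if a = x then X p b * matPow X s x q else 0))
            + ((if x = b then X p x * matPow X s a q else 0)
              - (if a = q then X p x * matPow X s x b else 0))) := by
      intro x
      calc D * (X p x * matPow X s x q)
          = (D * X p x) * matPow X s x q := by rw [mul_assoc]
        _ = (X p x * D + ((if p = b then X a x else 0) - (if a = x then X p b else 0)))
              * matPow X s x q := by rw [DX X Y hYX hXX a b p x]
        _ = X p x * (D * matPow X s x q)
              + ((if p = b then X a x * matPow X s x q else 0)
                - (if a = x then X p b * matPow X s x q else 0)) := by
            rw [add_mul, mul_assoc, sub_mul, ite_mul, ite_mul]; simp only [zero_mul]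
        _ = X p x * (matPow X s x q * D
              + ((if x = b then matPow X s a q else 0) - (if a = q then matPow X s x b else 0)))
              + ((if p = b then X a x * matPow X s x q else 0)
                - (if a = x then X p b * matPow X s x q else 0)) := by
            rw [ih a b x q]
        _ = (X p x * matPow X s x q) * D
              + (((if p = b then X a x * matPow X s x q else 0)
                  - (if a = x then X p b * matPow X s x q else 0))
                + ((if x = b then X p x * matPow X s a q else 0)
                  - (if a = q then X p x * matPow X s x b else 0))) := by
            simp only [mul_add, mul_sub, ← mul_assoc, mul_ite, mul_zero]
            abel
    have lhs : D * matPow X (s+1) p q = ∑ x, D * (X p x * matPow X s x q) := by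
      show D * (∑ x, X p x * matPow X s x q) = _
      rw [Finset.mul_sum]
    rw [lhs]
    simp only [step]
    rw [Finset.sum_add_distrib, ← Finset.sum_mul]
    have hrec : (∑ x, X p x * matPow X s x q) = matPow X (s+1) p q := rfl
    rw [hrec]
    congr 1
    rw [Finset.sum_add_distrib, Finset.sum_sub_distrib, Finset.sum_sub_distrib]
    have S1 : (∑ x, if p = b then X a x * matPow X s x q else 0)
        = (if p = b then matPow X (s+1) a q else 0) := by
      by_cases hpb : p = b <;> simp [hpb, matPow]
    have S2 : (∑ x, if a = x then X p b * matPow X s x q else 0)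
        = X p b * matPow X s a q := by
      rw [Finset.sum_ite_eq]; simp
    have S3 : (∑ x, if x = b then X p x * matPow X s a q else 0)
        = X p b * matPow X s a q := by
      rw [Finset.sum_ite_eq']; simp
    have S4 : (∑ x, if a = q then X p x * matPow X s x b else 0)
        = (if a = q then matPow X (s+1) p b else 0) := by
      by_cases haq : a = q <;> simp [haq, matPow]
    rw [S1, S2, S3, S4]
    abel

/-- `∑ M_{ba} D_{ab} = - N • Tr M` for `M = X^m`. -/
lemma traceMD (hYX : ∀ i j p q : Fin N,
      Y i j * X p q - X p q * Y i j = if i = q ∧ p = j then 1 else 0)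
    (hXX : ∀ i j p q : Fin N, X i j * X p q = X p q * X i j)
    (m : ℕ) :
    (∑ a, ∑ b, matPow X m b a * (∑ l, (X a l * Y l b - Y a l * X l b)))
      = -(N • ∑ a, matPow X m a a) := by
  have expand : ∀ a b : Fin N,
      matPow X m b a * (∑ l, (X a l * Y l b - Y a l * X l b))
        = (∑ l, (matPow X m b a * X a l) * Y l b)
          - ((∑ l, (matPow X m b a * X l b) * Y a l)
            + (∑ l : Fin N, if a = b then matPow X m b a else 0)) := by
    intro a b
    rw [Finset.mul_sum]
    rw [← Finset.sum_add_distrib, ← Finset.sum_sub_distrib]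
    refine Finset.sum_congr rfl fun l _ => ?_
    have h := hYX a l l b
    rw [sub_eq_iff_eq_add] at h
    have h2 : (if a = b ∧ l = l then (1:A) else 0) = if a = b then 1 else 0 := by simp
    rw [h2] at h
    calc matPow X m b a * (X a l * Y l b - Y a l * X l b)
        = matPow X m b a * (X a l * Y l b) - matPow X m b a * (Y a l * X l b) := by
          rw [mul_sub]
      _ = (matPow X m b a * X a l) * Y l b
            - matPow X m b a * (((if a = b then 1 else 0) + X l b * Y a l)) := by
          rw [← mul_assoc, h]
      _ = (matPow X m b a * X a l) * Y l b
            - ((matPow X m b a * X l b) * Y a l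
              + (if a = b then matPow X m b a else 0)) := by
          simp only [mul_add, mul_ite, mul_one, mul_zero, ← mul_assoc]
          abel
  simp only [expand]
  simp only [Finset.sum_sub_distrib, Finset.sum_add_distrib]
  have hA : (∑ a : Fin N, ∑ b : Fin N, ∑ l : Fin N, matPow X m b a * X a l * Y l b)
      = ∑ b : Fin N, ∑ l : Fin N, matPow X (m+1) b l * Y l b := by
    rw [Finset.sum_comm]
    refine Finset.sum_congr rfl fun b _ => ?_
    rw [Finset.sum_comm]
    refine Finset.sum_congr rfl fun l _ => ?_
    rw [← Finset.sum_mul, ← pow_succ_right]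
  have hB : (∑ a : Fin N, ∑ b : Fin N, ∑ l : Fin N, matPow X m b a * X l b * Y a l)
      = ∑ b : Fin N, ∑ l : Fin N, matPow X (m+1) b l * Y l b := by
    have h1 : (∑ a : Fin N, ∑ b : Fin N, ∑ l : Fin N, matPow X m b a * X l b * Y a l)
        = ∑ a : Fin N, ∑ l : Fin N, matPow X (m+1) l a * Y a l := by
      refine Finset.sum_congr rfl fun a _ => ?_
      rw [Finset.sum_comm]
      refine Finset.sum_congr rfl fun l _ => ?_
      rw [← Finset.sum_mul]
      congr 1
      show _ = ∑ p, X l p * matPow X m p a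
      refine Finset.sum_congr rfl fun b _ => ?_
      rw [powX_comm X hXX]
    rw [h1, Finset.sum_comm]
  have hC : (∑ a : Fin N, ∑ b : Fin N, ∑ _l : Fin N,
        if a = b then matPow X m b a else 0)
      = N • ∑ a, matPow X m a a := by
    simp only [Finset.sum_const, Finset.card_univ, Fintype.card_fin, ← Finset.smul_sum]
    congr 1
    refine Finset.sum_congr rfl fun a _ => ?_
    rw [Finset.sum_ite_eq]
    simp
  rw [hA, hB, hC]
  abel

end St2Aux

open St2Aux

/-- In the Weyl algebra on variables `X^i_j` with `Y^i_j = ∂/∂X^j_i`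
(i.e. `[Y^i_j, X^k_l] = δ^i_l δ^k_j`), one has `Tr(X^r [X,Y] X^s) = -Tr(X^r)·Tr(X^s)`. -/
theorem statement2 (N : ℕ) (A : Type*) [Ring A]
    (X Y : Fin N → Fin N → A)
    (hYX : ∀ i j p q : Fin N,
      Y i j * X p q - X p q * Y i j = if i = q ∧ p = j then 1 else 0)
    (hXX : ∀ i j p q : Fin N, X i j * X p q = X p q * X i j)
    (hYY : ∀ i j p q : Fin N, Y i j * Y p q = Y p q * Y i j)
    (r s : ℕ) :
    (∑ i, ∑ a, ∑ b, matPow X r i a *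
        (∑ l, (X a l * Y l b - Y a l * X l b)) * matPow X s b i)
      = - ((∑ i, matPow X r i i) * (∑ i, matPow X s i i)) := by
  have step1 : ∀ i a b : Fin N,
      matPow X r i a * (∑ l, (X a l * Y l b - Y a l * X l b)) * matPow X s b i
        = matPow X r i a * (matPow X s b i * (∑ l, (X a l * Y l b - Y a l * X l b)))
          + (matPow X r i a * matPow X s a i
            - (if a = i then matPow X r i a * matPow X s b b else 0)) := by
    intro i a b
    rw [mul_assoc, DPow X Y hYX hXX s a b b i]
    simp only [eq_self_iff_true, if_true, mul_add, mul_sub, mul_ite, mul_zero]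
  simp only [step1]
  have split3 : ∀ (F G H : Fin N → Fin N → Fin N → A),
      (∑ i, ∑ a, ∑ b, (F i a b + (G i a b - H i a b)))
        = (∑ i, ∑ a, ∑ b, F i a b)
          + ((∑ i, ∑ a, ∑ b, G i a b) - (∑ i, ∑ a, ∑ b, H i a b)) := by
    intro F G H
    simp only [Finset.sum_add_distrib, Finset.sum_sub_distrib]
  rw [split3]
  have hT1 : (∑ i : Fin N, ∑ a : Fin N, ∑ b : Fin N,
        matPow X r i a * (matPow X s b i * (∑ l, (X a l * Y l b - Y a l * X l b))))
      = -(N • ∑ a, matPow X (r + s) a a) := by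
    have h1 : ∀ i a b : Fin N,
        matPow X r i a * (matPow X s b i * (∑ l, (X a l * Y l b - Y a l * X l b)))
          = (matPow X s b i * matPow X r i a) * (∑ l, (X a l * Y l b - Y a l * X l b)) := by
      intro i a b
      rw [← mul_assoc, powPow_comm X hXX r s i a b i]
    simp only [h1]
    rw [Finset.sum_comm]
    have h2 : (∑ a : Fin N, ∑ i : Fin N, ∑ b : Fin N,
          (matPow X s b i * matPow X r i a) * (∑ l, (X a l * Y l b - Y a l * X l b)))
        = ∑ a : Fin N, ∑ b : Fin N, matPow X (s + r) b a *
            (∑ l, (X a l * Y l b - Y a l * X l b)) := by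
      refine Finset.sum_congr rfl fun a _ => ?_
      rw [Finset.sum_comm]
      refine Finset.sum_congr rfl fun b _ => ?_
      rw [← Finset.sum_mul, ← matPow_add]
    rw [h2, traceMD X Y hYX hXX (s + r), Nat.add_comm s r]
  have hT2 : (∑ i : Fin N, ∑ a : Fin N, ∑ _b : Fin N,
        matPow X r i a * matPow X s a i)
      = N • ∑ a, matPow X (r + s) a a := by
    simp only [Finset.sum_const, Finset.card_univ, Fintype.card_fin, ← Finset.smul_sum]
    congr 1
    refine Finset.sum_congr rfl fun i _ => ?_
    rw [matPow_add]
  have hT3 : (∑ i : Fin N, ∑ a : Fin N, ∑ b : Fin N,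
        if a = i then matPow X r i a * matPow X s b b else 0)
      = (∑ i, matPow X r i i) * (∑ i, matPow X s i i) := by
    rw [Finset.sum_mul]
    refine Finset.sum_congr rfl fun i _ => ?_
    have h3 : ∀ a : Fin N, (∑ b : Fin N, if a = i then matPow X r i a * matPow X s b b else 0)
        = if a = i then ∑ b : Fin N, matPow X r i a * matPow X s b b else 0 := by
      intro a; split <;> simp
    simp only [h3]
    rw [Finset.sum_ite_eq']
    simp [Finset.mul_sum]
  rw [hT1, hT2, hT3]
  abel
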